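/- Let P be a locally finite partially ordered set, Q ⊆ P, and x, y ∈ Q with x ≤ y. Then Inv_Q θ (x,y) lies in the ℚ-span of the [x,y]_Q-admissible monomials. Moreover, if m is an [x,y]_Q-admissible monomial with admissible form (t_{w₁}/t_{z₁})⋯(t_{w_k}/t_{z_k}), then the coefficient of m in Inv_Q θ (x,y) equals Inv_Q μ (x,z₁) · ∏_{i=1}^{k} μ_{Q_i}(z_i, w_i) · Γ_Q(w_i, z_{i+1}), where z_{k+1} = y and Q_i = Q ∪ {w_i}. -/

import Mathlib

set_option linter.unusedSectionVars false
set_option maxHeartbeats 1000000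


open Finset
open scoped Classical

variable {P A : Type*}

/-- The zeta function of a poset, as an element of its incidence algebra. -/
noncomputable def zeta [PartialOrder P] [CommRing A] : P → P → A :=
  fun x y => if x ≤ y then 1 else 0

/-- `IsInvOn Q ε η` says that `η` represents the inverse `Inv_Q ε` of the restriction
`ε|_{Q×Q}` of `ε` in the incidence algebra `I_A(Q)` of the subposet `Q ⊆ P`.
Elements of `I_A(Q)` are encoded as functions `P → P → A` supported on pairs
`x ≤ y` with `x, y ∈ Q`; convolution over `Q` is the sum over `z ∈ [x,y]_Q`,
and the unit of `I_A(Q)` is the Kronecker delta on `Q`. -/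
noncomputable def IsInvOn [PartialOrder P] [LocallyFiniteOrder P] [CommRing A]
    (Q : Set P) (ε η : P → P → A) : Prop :=
  (∀ x y, ¬(x ∈ Q ∧ y ∈ Q ∧ x ≤ y) → η x y = 0) ∧
  (∀ x ∈ Q, ∀ y ∈ Q,
    ∑ z ∈ (Finset.Icc x y).filter (· ∈ Q), ε x z * η z y = if x = y then 1 else 0) ∧
  (∀ x ∈ Q, ∀ y ∈ Q,
    ∑ z ∈ (Finset.Icc x y).filter (· ∈ Q), η x z * ε z y = if x = y then 1 else 0)

/-- The Laurent polynomial algebra `A_P = ℚ[t_x^{±1} : x ∈ P]`, realized as the monoid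
algebra of `ℚ` over the additive group of finitely supported exponent vectors `P →₀ ℤ`. -/
abbrev AP (P : Type*) : Type _ := AddMonoidAlgebra ℚ (P →₀ ℤ)

/-- The exponent vector of the variable `t_x`. -/
noncomputable def tv (x : P) : P →₀ ℤ := Finsupp.single x 1

/-- The element `θ(x,y) = Σ_{x ≤ z ≤ y} μ(z,y) · t_z/t_x` of `I_{A_P}(P)`,
where `mob` is the Möbius function of `P`. -/
noncomputable def theta [PartialOrder P] [LocallyFiniteOrder P]
    (mob : P → P → ℚ) (x y : P) : AP P :=
  ∑ z ∈ Finset.Icc x y, mob z y • AddMonoidAlgebra.single (tv z - tv x) (1 : ℚ)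

section
variable [PartialOrder P] [LocallyFiniteOrder P]

lemma filter_Icc_self {Q : Set P} {a : P} (ha : a ∈ Q) :
    (Finset.Icc a a).filter (· ∈ Q) = {a} := by
  rw [Finset.Icc_self, Finset.filter_singleton, if_pos ha]

lemma diag_one_left {Q : Set P} {ε η : P → P → A} [CommRing A] (h : IsInvOn Q ε η)
    {a : P} (ha : a ∈ Q) (hε : ε a a = 1) : η a a = 1 := by
  have := h.2.1 a ha a ha
  rw [filter_Icc_self ha, Finset.sum_singleton, hε, one_mul, if_pos rfl] at this
  exact this

lemma diag_one_right {Q : Set P} {ε η : P → P → A} [CommRing A] (h : IsInvOn Q ε η)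
    {a : P} (ha : a ∈ Q) (hε : ε a a = 1) : η a a = 1 := by
  have := h.2.2 a ha a ha
  rw [filter_Icc_self ha, Finset.sum_singleton, hε, mul_one, if_pos rfl] at this
  exact this

lemma zeta_diag [CommRing A] (a : P) : (zeta a a : A) = 1 := by
  simp [zeta]

lemma theta_diag {mob : P → P → ℚ} (hd : mob a a = 1) : theta mob a a = 1 := by
  rw [theta, Finset.Icc_self, Finset.sum_singleton, hd, sub_self, one_smul,
    AddMonoidAlgebra.one_def]

/-- the AP-level recursion for invθ -/
lemma rec_theta {Q : Set P} {mob : P → P → ℚ} {invθ : P → P → AP P}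
    (hmob : IsInvOn (Set.univ : Set P) zeta mob) (hinvθ : IsInvOn Q (theta mob) invθ)
    {a y : P} (ha : a ∈ Q) (hy : y ∈ Q) (hay : a ≤ y) :
    invθ a y = (if a = y then (1 : AP P) else 0)
      - ∑ c ∈ ((Finset.Icc a y).filter (· ∈ Q)).erase a, theta mob a c * invθ c y := by
  have hmem : a ∈ (Finset.Icc a y).filter (· ∈ Q) := by
    simp [Finset.mem_filter, Finset.mem_Icc, hay, ha]
  have hrec := hinvθ.2.1 a ha y hy
  rw [← Finset.add_sum_erase _ _ hmem] at hrec
  have hd : mob a a = 1 := diag_one_left hmob (Set.mem_univ a) (zeta_diag a)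
  rw [theta_diag hd, one_mul] at hrec
  rw [← hrec]; abel

lemma theta_mul_apply {mob : P → P → ℚ} {a c : P} (F : AP P) (v : P →₀ ℤ) :
    (theta mob a c * F).coeff v = ∑ u ∈ Finset.Icc a c, mob u c * F.coeff (v + tv a - tv u) := by
  rw [theta, Finset.sum_mul, AddMonoidAlgebra.coeff_sum, Finset.sum_apply']
  refine Finset.sum_congr rfl (fun u _ => ?_)
  rw [smul_mul_assoc, AddMonoidAlgebra.coeff_smul, Finsupp.smul_apply,
    AddMonoidAlgebra.coeff_single_mul_apply, one_mul,
    smul_eq_mul]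
  have harg : -(tv u - tv a) + v = v + tv a - tv u := by abel
  rw [harg]

/-- the coefficient-level recursion -/
lemma rec_coeff {Q : Set P} {mob : P → P → ℚ} {invθ : P → P → AP P}
    (hmob : IsInvOn (Set.univ : Set P) zeta mob) (hinvθ : IsInvOn Q (theta mob) invθ)
    {a y : P} (ha : a ∈ Q) (hy : y ∈ Q) (hay : a ≤ y) (v : P →₀ ℤ) :
    (invθ a y).coeff v = (if a = y then (if (0 : P →₀ ℤ) = v then (1:ℚ) else 0) else 0)
      - ∑ c ∈ ((Finset.Icc a y).filter (· ∈ Q)).erase a,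
          ∑ u ∈ Finset.Icc a c, mob u c * (invθ c y).coeff (v + tv a - tv u) := by
  have := congrArg (fun f : AP P => f.coeff v) (rec_theta hmob hinvθ ha hy hay)
  beta_reduce at this
  rw [this, AddMonoidAlgebra.coeff_sub, Finsupp.sub_apply, AddMonoidAlgebra.coeff_sum,
    Finset.sum_apply']
  congr 1
  · split
    · rw [AddMonoidAlgebra.one_def, AddMonoidAlgebra.coeff_single, Finsupp.single_apply]
    · rfl
  · exact Finset.sum_congr rfl (fun c _ => theta_mul_apply _ _)

inductive Adm (Q : Set P) (y : P) : P → (P →₀ ℤ) → Prop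
  | nil (a : P) (h : a ≤ y) : Adm Q y a 0
  | cons (a z w : P) (v : P →₀ ℤ) (hz : z ∈ Q) (haz : a ≤ z) (hzw : z ≤ w)
      (h : Adm Q y w v) : Adm Q y a (tv w - tv z + v)

inductive RAdm (Q : Set P) (y : P) : Bool → P → (P →₀ ℤ) → Prop
  | nil (b : Bool) (a : P) (h : a ≤ y) : RAdm Q y b a 0
  | cons (b : Bool) (a z w : P) (v : P →₀ ℤ) (hz : z ∈ Q) (haz : a ≤ z)
      (hbz : b = true → a ≠ z) (hzw : z < w) (h : RAdm Q y true w v) :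
      RAdm Q y b a (tv w - tv z + v)

lemma Adm.mono {Q : Set P} {y c v} (h : Adm Q y c v) {a : P} (hac : a ≤ c) :
    Adm Q y a v := by
  cases h with
  | nil _ h => exact .nil a (le_trans hac h)
  | cons _ z w v hz haz hzw h => exact .cons a z w v hz (le_trans hac haz) hzw h

lemma RAdm.mono {Q : Set P} {y c v} (h : RAdm Q y false c v) {a : P} (hac : a ≤ c) :
    RAdm Q y false a v := by
  cases h with
  | nil _ _ h => exact .nil false a (le_trans hac h)
  | cons _ _ z w v hz haz hbz hzw h =>
      exact .cons false a z w v hz (le_trans hac haz) (by simp) hzw h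

lemma Adm.toRAdm {Q : Set P} {y a v} (h : Adm Q y a v) : RAdm Q y false a v := by
  induction h with
  | nil a h => exact .nil false a h
  | cons a z w v hz haz hzw h ih =>
    rcases eq_or_lt_of_le hzw with rfl | hlt
    · simpa using ih.mono haz
    · cases ih with
      | nil _ _ hwy => exact .cons false a z w 0 hz haz (by simp) hlt (.nil true w hwy)
      | cons _ _ z'' w'' v'' hz'' hwz'' _ hz''w'' h'' =>
        rcases eq_or_lt_of_le hwz'' with h1 | h1
        · have he : tv w - tv z + (tv w'' - tv z'' + v'') = tv w'' - tv z + v'' := by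
            rw [← h1]; abel
          rw [he]
          exact .cons false a z w'' v'' hz haz (by simp) (lt_trans hlt (h1 ▸ hz''w'')) h''
        · exact .cons false a z w _ hz haz (by simp) hlt
            (.cons true w z'' w'' v'' hz'' hwz'' (fun _ => ne_of_lt h1) hz''w'' h'')

lemma RAdm.facts {Q : Set P} {y : P} {b a v} (h : RAdm Q y b a v) :
    a ≤ y ∧
    (∀ p, v p ≠ 0 → a ≤ p ∧ p ≤ y ∧ (b = true → a ≠ p)) ∧
    (∀ p, v p < 0 → p ∈ Q) ∧
    (∀ p, v p = -1 ∨ v p = 0 ∨ v p = 1) ∧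
    (∀ p, 0 < v p → ∃ q, v q < 0 ∧ q < p) := by
  induction h with
  | nil b a h => simp [h]
  | cons b a z w v hz haz hbz hzw h ih =>
    obtain ⟨hwy, hsupp, hneg, hval, hpos⟩ := ih
    have hvz : v z = 0 := by
      by_contra hne
      exact absurd hzw (not_lt_of_ge (le_of_lt (lt_of_le_of_ne (hsupp z hne).1
        (fun hh => (hsupp z hne).2.2 rfl hh))))
    have hvw : v w = 0 := by
      by_contra hne
      exact (hsupp w hne).2.2 rfl rfl
    have hzw' : z ≠ w := ne_of_lt hzw
    have happ : ∀ p, (tv w - tv z + v) p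
        = (if w = p then 1 else 0) - (if z = p then 1 else 0) + v p := by
      intro p
      simp [tv, Finsupp.single_apply]
    have hz' : (tv w - tv z + v) z = -1 := by
      rw [happ z, if_neg (Ne.symm hzw'), if_pos rfl, hvz]; ring
    have hw' : (tv w - tv z + v) w = 1 := by
      rw [happ w, if_pos rfl, if_neg hzw', hvw]; ring
    have hother : ∀ p, p ≠ z → p ≠ w → (tv w - tv z + v) p = v p := by
      intro p h1 h2
      rw [happ p, if_neg (Ne.symm h2), if_neg (Ne.symm h1)]; ring
    have hzy : z ≤ y := le_trans (le_of_lt hzw) hwy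
    refine ⟨le_trans haz hzy, ?_, ?_, ?_, ?_⟩
    · intro p hp
      by_cases h1 : p = z
      · subst h1; exact ⟨haz, hzy, fun hb => hbz hb⟩
      by_cases h2 : p = w
      · subst h2; exact ⟨le_trans haz hzw.le, hwy, fun _ => ne_of_lt (lt_of_le_of_lt haz hzw)⟩
      · rw [hother p h1 h2] at hp
        obtain ⟨h3, h4, h5⟩ := hsupp p hp
        exact ⟨le_trans haz (le_trans hzw.le h3), h4,
          fun _ => ne_of_lt (lt_of_le_of_lt haz (lt_of_lt_of_le hzw (lt_of_le_of_ne h3 (fun hh => h5 rfl hh)).le))⟩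
    · intro p hp
      by_cases h1 : p = z
      · subst h1; exact hz
      by_cases h2 : p = w
      · subst h2; rw [hw'] at hp; omega
      · rw [hother p h1 h2] at hp; exact hneg p hp
    · intro p
      by_cases h1 : p = z
      · subst h1; rw [hz']; left; rfl
      by_cases h2 : p = w
      · subst h2; rw [hw']; right; right; rfl
      · rw [hother p h1 h2]; exact hval p
    · intro p hp
      by_cases h1 : p = z
      · subst h1; rw [hz'] at hp; omega
      by_cases h2 : p = w
      · subst h2
        exact ⟨z, by rw [hz']; omega, hzw⟩
      · rw [hother p h1 h2] at hp
        obtain ⟨q, hq1, hq2⟩ := hpos p hp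
        have hq3 : q ≠ z := by rintro rfl; rw [hvz] at hq1; omega
        have hq4 : q ≠ w := by rintro rfl; rw [hvw] at hq1; omega
        exact ⟨q, by rw [hother q hq3 hq4]; exact hq1, hq2⟩



lemma Adm.le_y {Q : Set P} {y a v} (h : Adm Q y a v) : a ≤ y := by
  induction h with
  | nil a h => exact h
  | cons a z w v hz haz hzw h ih => exact le_trans haz (le_trans hzw ih)

/-- bridge: inductive admissibility gives Fin-indexed data -/
lemma Adm.toFin {Q : Set P} {y a v} (h : Adm Q y a v) :
    ∃ (k : ℕ) (z : Fin (k+1) → P) (w : Fin k → P),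
      z (Fin.last k) = y ∧
      (∀ i : Fin k, z i.castSucc ∈ Q ∧ a ≤ z i.castSucc ∧ z i.castSucc ≤ y) ∧
      (∀ i : Fin k, z i.castSucc ≤ w i) ∧ (∀ i : Fin k, w i ≤ z i.succ) ∧
      v = ∑ i : Fin k, (tv (w i) - tv (z i.castSucc)) := by
  induction h with
  | nil a h =>
      exact ⟨0, fun _ => y, Fin.elim0, rfl, fun i => i.elim0, fun i => i.elim0,
        fun i => i.elim0, by simp⟩
  | cons a z w v hz haz hzw h ih =>
      obtain ⟨k, Z, W, hlast, hmem, hZW, hWZ, hsum⟩ := ih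
      have hwy : w ≤ y := h.le_y
      have hwZ : ∀ j : Fin (k+1), w ≤ Z j := by
        intro j
        refine Fin.lastCases ?_ ?_ j
        · rw [hlast]; exact hwy
        · exact fun j => (hmem j).2.1
      refine ⟨k+1, Fin.cons z Z, Fin.cons w W, ?_, ?_, ?_, ?_, ?_⟩
      · rw [← Fin.succ_last, Fin.cons_succ]; exact hlast
      · intro i
        refine Fin.cases ?_ ?_ i
        · rw [Fin.castSucc_zero, Fin.cons_zero]
          exact ⟨hz, haz, le_trans hzw hwy⟩
        · intro j
          rw [← Fin.succ_castSucc, Fin.cons_succ]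
          exact ⟨(hmem j).1, le_trans haz (le_trans hzw (hwZ j.castSucc)), (hmem j).2.2⟩
      · intro i
        refine Fin.cases ?_ ?_ i
        · rw [Fin.castSucc_zero, Fin.cons_zero, Fin.cons_zero]; exact hzw
        · intro j
          rw [← Fin.succ_castSucc, Fin.cons_succ, Fin.cons_succ]
          exact hZW j
      · intro i
        refine Fin.cases ?_ ?_ i
        · rw [Fin.cons_zero, Fin.cons_succ]; exact hwZ 0
        · intro j
          rw [Fin.cons_succ, Fin.cons_succ]; exact hWZ j
      · rw [Fin.sum_univ_succ]
        simp only [Fin.castSucc_zero, Fin.cons_zero, Fin.cons_succ, ← Fin.succ_castSucc]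
        rw [← hsum]

/-- Part (1): span membership, inductive-admissibility form. -/
lemma span_adm {Q : Set P} {mob : P → P → ℚ} {invθ : P → P → AP P}
    (hmob : IsInvOn (Set.univ : Set P) zeta mob) (hinvθ : IsInvOn Q (theta mob) invθ)
    {y : P} (hy : y ∈ Q) :
    ∀ n : ℕ, ∀ a : P, a ∈ Q → a ≤ y → (Finset.Icc a y).card ≤ n →
    invθ a y ∈ Submodule.span ℚ
      {f : AP P | ∃ v, Adm Q y a v ∧ f = AddMonoidAlgebra.single v (1:ℚ)} := by
  intro n
  induction n with
  | zero =>
      intro a ha hay hcard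
      have : a ∈ Finset.Icc a y := by simp [hay]
      have := Finset.card_pos.mpr ⟨a, this⟩
      omega
  | succ n ih =>
      intro a ha hay hcard
      rw [rec_theta hmob hinvθ ha hy hay]
      refine sub_mem ?_ ?_
      · split
        · exact Submodule.subset_span ⟨0, Adm.nil a hay, (AddMonoidAlgebra.one_def).symm⟩
        · exact zero_mem _
      · refine Submodule.sum_mem _ (fun c hc => ?_)
        have hca : c ≠ a := Finset.ne_of_mem_erase hc
        have hc' := Finset.mem_of_mem_erase hc
        rw [Finset.mem_filter, Finset.mem_Icc] at hc'
        obtain ⟨⟨hac, hcy⟩, hcQ⟩ := hc'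
        have hsub : Finset.Icc c y ⊆ Finset.Icc a y :=
          Finset.Icc_subset_Icc_left hac
        have hnot : a ∉ Finset.Icc c y := by
          rw [Finset.mem_Icc]
          rintro ⟨h1, -⟩
          exact hca (le_antisymm h1 hac)
        have hlt : (Finset.Icc c y).card < (Finset.Icc a y).card :=
          Finset.card_lt_card ⟨hsub, fun hss => hnot (hss (by simp [hay]))⟩
        have hmemc := ih c hcQ hcy (by omega)
        refine Submodule.span_induction ?_ ?_ ?_ ?_ hmemc
        · rintro f ⟨v, hv, rfl⟩
          have hexp : theta mob a c * AddMonoidAlgebra.single v (1:ℚ) =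
              ∑ u ∈ Finset.Icc a c,
                mob u c • AddMonoidAlgebra.single (tv u - tv a + v) (1:ℚ) := by
            rw [theta, Finset.sum_mul]
            refine Finset.sum_congr rfl (fun u _ => ?_)
            rw [smul_mul_assoc, AddMonoidAlgebra.single_mul_single, mul_one]
          rw [hexp]
          refine Submodule.sum_mem _ (fun u hu => ?_)
          rw [Finset.mem_Icc] at hu
          refine Submodule.smul_mem _ _ (Submodule.subset_span ?_)
          exact ⟨tv u - tv a + v, Adm.cons a a u v ha le_rfl hu.1 (hv.mono hu.2), rfl⟩
        · rw [mul_zero]; exact zero_mem _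
        · intro f g _ _ hf hg; rw [mul_add]; exact add_mem hf hg
        · intro q f _ hf; rw [mul_smul_comm]; exact Submodule.smul_mem _ _ hf

/-- Zero-coefficient lemma. -/
lemma coeff_zero {Q : Set P} {mob : P → P → ℚ} {invθ : P → P → AP P}
    (hmob : IsInvOn (Set.univ : Set P) zeta mob) (hinvθ : IsInvOn Q (theta mob) invθ)
    {y : P} (hy : y ∈ Q) {a : P} (ha : a ∈ Q) (hay : a ≤ y)
    {v : P →₀ ℤ} (hv : ¬ Adm Q y a v) : (invθ a y).coeff v = 0 := by
  have hspan := span_adm hmob hinvθ hy (Finset.Icc a y).card a ha hay le_rfl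
  refine Submodule.span_induction ?_ ?_ ?_ ?_ hspan
  · rintro f ⟨v', hv', rfl⟩
    rw [AddMonoidAlgebra.coeff_single, Finsupp.single_apply]  -- AddMonoidAlgebra.single is Finsupp.single
    rw [if_neg]
    rintro rfl
    exact hv hv'
  · rfl
  · intro f g _ _ hf hg; rw [AddMonoidAlgebra.coeff_add, Finsupp.add_apply, hf, hg, add_zero]
  · intro q f _ hf; rw [AddMonoidAlgebra.coeff_smul, Finsupp.smul_apply, hf, smul_zero]


section DataFacts
variable {k : ℕ} {z : Fin (k+1) → P} {w : Fin k → P}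

lemma data_mono (hZW : ∀ i, z i.castSucc ≤ w i) (hWZ : ∀ i, w i ≤ z i.succ) :
    Monotone z :=
  Fin.monotone_iff_le_succ.mpr fun i => le_trans (hZW i) (hWZ i)

lemma data_o1 (hZW : ∀ i, z i.castSucc ≤ w i) (hred : ∀ i (j : Fin k), w i ≠ z j.castSucc)
    (i : Fin k) : z i.castSucc < w i :=
  lt_of_le_of_ne (hZW i) (Ne.symm (hred i i))

lemma data_o2 (hZW : ∀ i, z i.castSucc ≤ w i) (hWZ : ∀ i, w i ≤ z i.succ)
    (hred : ∀ i (j : Fin k), w i ≠ z j.castSucc) {i j : Fin k} (hij : i < j) :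
    w i < z j.castSucc :=
  lt_of_le_of_ne
    (le_trans (hWZ i) (data_mono hZW hWZ (Fin.succ_le_castSucc_iff.mpr hij))) (hred i j)

lemma data_zlt (hZW : ∀ i, z i.castSucc ≤ w i) (hWZ : ∀ i, w i ≤ z i.succ)
    (hred : ∀ i (j : Fin k), w i ≠ z j.castSucc) {i j : Fin k} (hij : i < j) :
    z i.castSucc < z j.castSucc :=
  lt_trans (data_o1 hZW hred i) (data_o2 hZW hWZ hred hij)

lemma data_wlt (hZW : ∀ i, z i.castSucc ≤ w i) (hWZ : ∀ i, w i ≤ z i.succ)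
    (hred : ∀ i (j : Fin k), w i ≠ z j.castSucc) {i j : Fin k} (hij : i < j) :
    w i < w j :=
  lt_trans (data_o2 hZW hWZ hred hij) (data_o1 hZW hred j)

lemma expSum_apply (z : Fin (k+1) → P) (w : Fin k → P) (p : P) :
    (∑ i : Fin k, (tv (w i) - tv (z i.castSucc))) p
      = ∑ i : Fin k, ((if w i = p then (1:ℤ) else 0) - (if z i.castSucc = p then 1 else 0)) := by
  rw [Finset.sum_apply']
  exact Finset.sum_congr rfl fun i _ => by
    rw [Finsupp.sub_apply, tv, tv, Finsupp.single_apply, Finsupp.single_apply]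

lemma data_vz (hZW : ∀ i, z i.castSucc ≤ w i) (hWZ : ∀ i, w i ≤ z i.succ)
    (hred : ∀ i (j : Fin k), w i ≠ z j.castSucc) (j : Fin k) :
    (∑ i : Fin k, (tv (w i) - tv (z i.castSucc))) (z j.castSucc) = -1 := by
  rw [expSum_apply]
  have : ∀ i ∈ Finset.univ, ((if w i = z j.castSucc then (1:ℤ) else 0)
      - (if z i.castSucc = z j.castSucc then 1 else 0)) = if i = j then (-1:ℤ) else 0 := by
    intro i _
    rw [if_neg (hred i j)]
    rcases lt_trichotomy i j with h | h | h
    · rw [if_neg (ne_of_lt (data_zlt hZW hWZ hred h)), if_neg (ne_of_lt h)]; ring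
    · subst h; rw [if_pos rfl, if_pos rfl]; ring
    · rw [if_neg (ne_of_gt (data_zlt hZW hWZ hred h)), if_neg (ne_of_gt h)]; ring
  rw [Finset.sum_congr rfl this, Finset.sum_ite_eq' Finset.univ j (fun _ => (-1:ℤ)),
    if_pos (Finset.mem_univ j)]

lemma data_vw (hZW : ∀ i, z i.castSucc ≤ w i) (hWZ : ∀ i, w i ≤ z i.succ)
    (hred : ∀ i (j : Fin k), w i ≠ z j.castSucc) (j : Fin k) :
    (∑ i : Fin k, (tv (w i) - tv (z i.castSucc))) (w j) = 1 := by
  rw [expSum_apply]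
  have : ∀ i ∈ Finset.univ, ((if w i = w j then (1:ℤ) else 0)
      - (if z i.castSucc = w j then 1 else 0)) = if i = j then (1:ℤ) else 0 := by
    intro i _
    rw [if_neg (Ne.symm (hred j i))]
    rcases lt_trichotomy i j with h | h | h
    · rw [if_neg (ne_of_lt (data_wlt hZW hWZ hred h)), if_neg (ne_of_lt h)]; ring
    · subst h; rw [if_pos rfl, if_pos rfl]; ring
    · rw [if_neg (ne_of_gt (data_wlt hZW hWZ hred h)), if_neg (ne_of_gt h)]; ring
  rw [Finset.sum_congr rfl this, Finset.sum_ite_eq' Finset.univ j (fun _ => (1:ℤ)),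
    if_pos (Finset.mem_univ j)]

lemma data_vclass (z : Fin (k+1) → P) (w : Fin k → P) (p : P)
    (h : (∑ i : Fin k, (tv (w i) - tv (z i.castSucc))) p ≠ 0) :
    (∃ j : Fin k, p = z j.castSucc) ∨ (∃ j : Fin k, p = w j) := by
  by_contra hc
  push_neg at hc
  apply h
  rw [expSum_apply]
  refine Finset.sum_eq_zero fun i _ => ?_
  rw [if_neg (fun hh => hc.2 i hh.symm), if_neg (fun hh => hc.1 i hh.symm)]
  ring

end DataFacts


lemma shift_apply (v0 : P →₀ ℤ) (b u p : P) :
    (v0 + tv b - tv u) p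
      = v0 p + (if b = p then 1 else 0) - (if u = p then 1 else 0) := by
  simp [tv, Finsupp.single_apply]

section Main

variable {Q : Set P} {mob : P → P → ℚ} {invθ : P → P → AP P} {invμ : P → P → ℚ} {y : P}

lemma main_coeff
    (hmob : IsInvOn (Set.univ : Set P) zeta mob) (hinvθ : IsInvOn Q (theta mob) invθ)
    (hinvμ : IsInvOn Q mob invμ) (hy : y ∈ Q) :
    ∀ n : ℕ, ∀ a : P, a ∈ Q → a ≤ y → (Finset.Icc a y).card ≤ n →
    ∀ (k : ℕ) (z : Fin (k+1) → P) (w : Fin k → P),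
      z (Fin.last k) = y →
      (∀ i : Fin k, z i.castSucc ∈ Q ∧ a ≤ z i.castSucc ∧ z i.castSucc ≤ y) →
      (∀ i : Fin k, z i.castSucc ≤ w i) → (∀ i : Fin k, w i ≤ z i.succ) →
      (∀ i (j : Fin k), w i ≠ z j.castSucc) →
      ∀ mQ : Fin k → (P → P → ℚ), (∀ i, IsInvOn (Q ∪ {w i}) zeta (mQ i)) →
      (invθ a y).coeff (∑ i : Fin k, (tv (w i) - tv (z i.castSucc))) =
        invμ a (z 0) * ∏ i : Fin k, mQ i (z i.castSucc) (w i) *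
          (∑ c ∈ (Finset.Icc (w i) (z i.succ)).filter (· ∈ Q),
            mob (w i) c * invμ c (z i.succ)) := by
  intro n
  induction n with
  | zero =>
      intro a ha hay hcard
      exfalso
      have h1 : a ∈ Finset.Icc a y := by simp [hay]
      have := Finset.card_pos.mpr ⟨a, h1⟩
      omega
  | succ n IH =>
      intro a ha hay hcard k
      have hmaa : mob a a = 1 := diag_one_left hmob (Set.mem_univ a) (zeta_diag a)
      have hstep : ∀ c : P, a ≤ c → c ≠ a → c ≤ y → (Finset.Icc c y).card ≤ n := by
        intro c hac hca hcy
        have hsub : Finset.Icc c y ⊆ Finset.Icc a y := Finset.Icc_subset_Icc_left hac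
        have hnot : a ∉ Finset.Icc c y := by
          rw [Finset.mem_Icc]; rintro ⟨h1, -⟩; exact hca (le_antisymm h1 hac)
        have hlt : (Finset.Icc c y).card < (Finset.Icc a y).card :=
          Finset.card_lt_card ⟨hsub, fun hss => hnot (hss (by simp [hay]))⟩
        omega
      rcases k with _ | k'
      · -- k = 0 : constant term
        intro z w hlast hmem hZW hWZ hred mQ hmQ
        have hsum0 : (∑ i : Fin 0, (tv (w i) - tv (z i.castSucc))) = 0 := by simp
        have hz0 : z 0 = y := hlast
        rw [hsum0, rec_coeff hmob hinvθ ha hy hay 0]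
        have hin : ∀ c ∈ ((Finset.Icc a y).filter (· ∈ Q)).erase a,
            (∑ u ∈ Finset.Icc a c, mob u c * (invθ c y).coeff ((0:P→₀ℤ) + tv a - tv u))
              = mob a c * invμ c y := by
          intro c hc
          obtain ⟨hca, hmemc⟩ := Finset.mem_erase.mp hc
          rw [Finset.mem_filter, Finset.mem_Icc] at hmemc
          obtain ⟨⟨hac, hcy⟩, hcQ⟩ := hmemc
          rw [Finset.sum_eq_single_of_mem a (by simp [hac])]
          · have hred0 : (0:P→₀ℤ) + tv a - tv a = 0 := by abel
            rw [hred0]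
            congr 1
            have := IH c hcQ hcy (hstep c hac hca hcy) 0 (fun _ => y) (fun i => i.elim0)
              rfl (fun i => i.elim0) (fun i => i.elim0) (fun i => i.elim0)
              (fun i j => i.elim0) (fun i => i.elim0) (fun i => i.elim0)
            simpa using this
          · intro u hu hua
            rw [Finset.mem_Icc] at hu
            have hz' : (invθ c y).coeff ((0:P→₀ℤ) + tv a - tv u) = 0 := by
              refine coeff_zero hmob hinvθ hy hcQ hcy (fun hAdm => ?_)
              obtain ⟨-, hsupp, -, -, hpos⟩ := hAdm.toRAdm.facts
              have hva : ((0:P→₀ℤ) + tv a - tv u) a = 1 := by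
                rw [shift_apply, if_pos rfl, if_neg hua]
                simp
              obtain ⟨q, hq1, hq2⟩ := hpos a (by rw [hva]; norm_num)
              have hqa : q ≠ a := ne_of_lt hq2
              rw [shift_apply, if_neg (fun h => hqa h.symm)] at hq1
              by_cases hqu : u = q
              · exact absurd hq2 (not_lt_of_ge (le_trans hu.1 (le_of_eq hqu)))
              · rw [if_neg hqu] at hq1; simp at hq1
            rw [hz', mul_zero]
        rw [Finset.sum_congr rfl hin]
        have hids := hinvμ.2.1 a ha y hy
        rw [← Finset.add_sum_erase _ _
          (show a ∈ (Finset.Icc a y).filter (· ∈ Q) by simp [hay, ha]),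
          hmaa, one_mul] at hids
        rw [hz0]
        simp only [Finset.univ_eq_empty, Finset.prod_empty, mul_one, if_true]
        -- hids : invμ a y + Σ = if a = y then 1 else 0
        have : (∑ c ∈ ((Finset.Icc a y).filter (· ∈ Q)).erase a, mob a c * invμ c y)
            = (if a = y then (1:ℚ) else 0) - invμ a y := by linarith
        rw [this]
        ring
      · -- k = k' + 1
        intro z w hlast hmem hZW hWZ hred mQ hmQ
        set v := ∑ i : Fin (k'+1), (tv (w i) - tv (z i.castSucc)) with hv
        have hmono : Monotone z := data_mono hZW hWZ
        have hzy : ∀ j : Fin (k'+2), z j ≤ y := fun j => hlast ▸ hmono (Fin.le_last j)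
        have ho1 := data_o1 hZW hred
        have hvz := data_vz hZW hWZ hred
        have hvw := data_vw hZW hWZ hred
        have hvclass := data_vclass z w
        have haz0 : a ≤ z (Fin.castSucc 0) := (hmem 0).2.1
        have hvne : (0 : P →₀ ℤ) ≠ v := by
          intro h0
          have h1 := hvw 0
          rw [← hv, ← h0] at h1
          simp at h1
        rw [rec_coeff hmob hinvθ ha hy hay v, if_neg hvne, ite_self]
        rcases eq_or_lt_of_le haz0 with haeq | halt
        · -- a = z 0
          have hw0 : a < w 0 := haeq ▸ ho1 0
          have hw0y : w 0 ≤ y := le_trans (hWZ 0) (hzy _)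
          have hz1w : w 0 ≤ z ((0:Fin (k'+1)).succ) := hWZ 0
          have hva0 : v a = -1 := by rw [haeq]; exact hvz 0
          set z1 := z ((0:Fin (k'+1)).succ) with hz1
          set Pt := ∏ i : Fin k', mQ i.succ (z (i.succ).castSucc) (w i.succ) *
            (∑ cc ∈ (Finset.Icc (w i.succ) (z (i.succ).succ)).filter (· ∈ Q),
              mob (w i.succ) cc * invμ cc (z (i.succ).succ)) with hPt
          set G := ∑ cc ∈ (Finset.Icc (w 0) z1).filter (· ∈ Q),
              mob (w 0) cc * invμ cc z1 with hG
          set vt := ∑ i : Fin k', (tv (w i.succ) - tv (z (i.succ).castSucc)) with hvt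
          have hsplit : v = (tv (w 0) - tv (z (Fin.castSucc 0))) + vt := by
            rw [hv, Fin.sum_univ_succ, hvt]
          -- core contradiction producer
          have hqcore : ∀ (u' q : P), q ≠ a → q ≠ u' →
              (v + tv a - tv u') q < 0 → q < w 0 → False := by
            intro u' q hqa hqu hq1 hq2
            rw [shift_apply, if_neg (fun h => hqa h.symm), if_neg (fun h => hqu h.symm)] at hq1
            have hq3 : v q ≠ 0 := by omega
            rcases hvclass q hq3 with ⟨j', hj'⟩ | ⟨j', hj'⟩
            · by_cases hj'0 : j' = 0
              · exact hqa (by rw [hj', hj'0, ← haeq])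
              · have h4 := data_o2 hZW hWZ hred (Fin.pos_of_ne_zero hj'0)
                rw [← hj'] at h4
                exact lt_asymm hq2 h4
            · rw [hj', hvw j'] at hq1; omega
          -- the classification of nonvanishing terms
          have hZl : ∀ c, c ∈ Q → a ≤ c → c ≠ a → c ≤ y → ∀ u, a ≤ u → u ≤ c →
              (invθ c y).coeff (v + tv a - tv u) ≠ 0 → u = w 0 ∨ (u = c ∧ c < w 0) := by
            intro c hcQ hac hca hcy u hau huc hne
            have hAdm : Adm Q y c (v + tv a - tv u) := by
              by_contra h; exact hne (coeff_zero hmob hinvθ hy hcQ hcy h)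
            obtain ⟨-, hsupp, -, hval, hpos⟩ := hAdm.toRAdm.facts
            by_cases hua : u = a
            · exfalso
              have h1 : (v + tv a - tv u) a = -1 := by
                rw [shift_apply, if_pos rfl, if_pos (by rw [hua]), hva0]; ring
              have h2 := (hsupp a (by rw [h1]; norm_num)).1
              exact hca (le_antisymm h2 hac)
            · have hva1 : (v + tv a - tv u) a = 0 := by
                rw [shift_apply, if_pos rfl, if_neg hua, hva0]; ring
              by_cases hu0 : u = w 0
              · exact Or.inl hu0
              by_cases hvu : v u = 0
              · -- fresh u
                have hvalu : (v + tv a - tv u) u = -1 := by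
                  rw [shift_apply, if_neg (fun h => hua h.symm), if_pos rfl, hvu]; ring
                have h2 := hsupp u (by rw [hvalu]; norm_num)
                have hueqc : u = c := le_antisymm huc h2.1
                by_cases hulew : u ≤ w 0
                · exact Or.inr ⟨hueqc, hueqc ▸ lt_of_le_of_ne hulew hu0⟩
                · exfalso
                  have hvw0 : (v + tv a - tv u) (w 0) = 1 := by
                    rw [shift_apply, if_neg (ne_of_lt hw0), if_neg hu0, hvw 0]; ring
                  obtain ⟨q, hq1, hq2⟩ := hpos (w 0) (by rw [hvw0]; norm_num)
                  have hqa : q ≠ a := fun h => by rw [h, hva1] at hq1; omega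
                  have hqu : q ≠ u := fun h => hulew (le_of_lt (h ▸ hq2))
                  exact hqcore u q hqa hqu hq1 hq2
              · rcases hvclass u hvu with ⟨j, hj⟩ | ⟨j, hj⟩
                · exfalso
                  have hvalu : (v + tv a - tv u) u = -2 := by
                    rw [shift_apply, if_neg (fun h => hua h.symm), if_pos rfl, hj, hvz j]; ring
                  rcases hval u with h | h | h <;> rw [hvalu] at h <;> norm_num at h
                · exfalso
                  have hj0 : j ≠ 0 := by rintro rfl; exact hu0 hj
                  have hw0u : w 0 ≠ u := by
                    rw [hj]; exact ne_of_lt (data_wlt hZW hWZ hred (Fin.pos_of_ne_zero hj0))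
                  have hvw0 : (v + tv a - tv u) (w 0) = 1 := by
                    rw [shift_apply, if_neg (ne_of_lt hw0), if_neg (fun h => hw0u h.symm),
                      hvw 0]; ring
                  obtain ⟨q, hq1, hq2⟩ := hpos (w 0) (by rw [hvw0]; norm_num)
                  have hqa : q ≠ a := fun h => by rw [h, hva1] at hq1; omega
                  have hqu : q ≠ u := by
                    intro h
                    have : (v + tv a - tv u) u = 0 := by
                      rw [shift_apply, if_neg (fun hh => hua hh.symm), if_pos rfl, hj, hvw j]
                      ring
                    rw [h, this] at hq1; omega
                  exact hqcore u q hqa hqu hq1 hq2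
          -- evaluate the inner sums
          have hin : ∀ c ∈ ((Finset.Icc a y).filter (· ∈ Q)).erase a,
              (∑ u ∈ Finset.Icc a c, mob u c * (invθ c y).coeff (v + tv a - tv u))
                = (if w 0 ≤ c ∧ c ≤ z1 then mob (w 0) c * invμ c z1 else 0) * Pt
                  + (if c < w 0 then mQ 0 c (w 0) else 0) * (G * Pt) := by
            intro c hc
            obtain ⟨hca, hmemc⟩ := Finset.mem_erase.mp hc
            rw [Finset.mem_filter, Finset.mem_Icc] at hmemc
            obtain ⟨⟨hac, hcy⟩, hcQ⟩ := hmemc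
            by_cases hwc : w 0 ≤ c
            · -- survivor u = w 0
              have hBz : ¬ (c < w 0) := not_lt_of_ge hwc
              rw [Finset.sum_eq_single_of_mem (w 0)
                (by rw [Finset.mem_Icc]; exact ⟨le_of_lt hw0, hwc⟩)]
              · have hexp : v + tv a - tv (w 0) = vt := by
                  rw [hsplit, haeq]; abel
                rw [hexp]
                by_cases hcz1 : c ≤ z1
                · rw [if_pos ⟨hwc, hcz1⟩, if_neg hBz]
                  have hIH := IH c hcQ hcy (hstep c hac hca hcy) k'
                    (fun i => z i.succ) (fun i => w i.succ)
                    (by show z (Fin.last k').succ = y; rw [Fin.succ_last]; exact hlast)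
                    (fun i => by
                      show z i.castSucc.succ ∈ Q ∧ c ≤ z i.castSucc.succ ∧ z i.castSucc.succ ≤ y
                      rw [Fin.succ_castSucc]
                      exact ⟨(hmem i.succ).1,
                        le_trans hcz1 (hmono (Fin.succ_le_castSucc_iff.mpr (Fin.succ_pos i))),
                        (hmem i.succ).2.2⟩)
                    (fun i => by
                      show z i.castSucc.succ ≤ w i.succ
                      rw [Fin.succ_castSucc]; exact hZW i.succ)
                    (fun i => hWZ i.succ)
                    (fun i j => by
                      show w i.succ ≠ z j.castSucc.succ
                      rw [Fin.succ_castSucc]; exact hred i.succ j.succ)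
                    (fun i => mQ i.succ) (fun i => hmQ i.succ)
                  simp only [Fin.succ_castSucc] at hIH
                  rw [← hvt] at hIH
                  rw [hIH, ← hz1, ← hPt]
                  ring
                · rw [if_neg (fun hh => hcz1 hh.2), if_neg hBz]
                  have hzero : (invθ c y).coeff vt = 0 := by
                    refine coeff_zero hmob hinvθ hy hcQ hcy (fun hAdm => ?_)
                    obtain ⟨-, hsupp, -, -, -⟩ := hAdm.toRAdm.facts
                    rcases Nat.eq_zero_or_pos k' with hk0 | hkpos
                    · apply hcz1
                      subst hk0
                      have : (0 : Fin 1).succ = Fin.last 1 := rfl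
                      rw [hz1, this, hlast]
                      exact hcy
                    · have hj : ((⟨0, hkpos⟩ : Fin k').castSucc).succ
                          = (0 : Fin (k'+1)).succ := by
                        ext; simp
                      have hvtz : vt (z ((0:Fin (k'+1)).succ)) = -1 := by
                        have := data_vz (z := fun i => z i.succ) (w := fun i => w i.succ)
                          (fun i => by
                            show z i.castSucc.succ ≤ w i.succ
                            rw [Fin.succ_castSucc]; exact hZW i.succ)
                          (fun i => hWZ i.succ)
                          (fun i j => by
                            show w i.succ ≠ z j.castSucc.succ
                            rw [Fin.succ_castSucc]; exact hred i.succ j.succ)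
                          ⟨0, hkpos⟩
                        simp only [Fin.succ_castSucc] at this
                        rw [← hvt] at this
                        rw [← hj, Fin.succ_castSucc]
                        exact this
                      have := (hsupp (z ((0:Fin (k'+1)).succ)) (by rw [hvtz]; norm_num)).1
                      exact hcz1 this
                  rw [hzero, mul_zero]
                  ring
              · intro u hu huw
                rw [Finset.mem_Icc] at hu
                by_cases hne : (invθ c y).coeff (v + tv a - tv u) = 0
                · rw [hne, mul_zero]
                · exfalso
                  rcases hZl c hcQ hac hca hcy u hu.1 hu.2 hne with h | ⟨h1, h2⟩
                  · exact huw h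
                  · exact hBz h2
            · -- no u = w 0 survivor
              rw [if_neg (fun hh => hwc hh.1)]
              by_cases hclt : c < w 0
              · -- survivor u = c
                rw [Finset.sum_eq_single_of_mem c
                  (by rw [Finset.mem_Icc]; exact ⟨hac, le_refl c⟩)]
                · have hmcc : mob c c = 1 := diag_one_left hmob (Set.mem_univ c) (zeta_diag c)
                  have hicc : invμ c c = 1 := diag_one_right hinvμ hcQ hmcc
                  have hIH := IH c hcQ hcy (hstep c hac hca hcy) (k'+1)
                    (Fin.cons c (fun i => z i.succ)) w
                    (by
                      rw [← Fin.succ_last, Fin.cons_succ, Fin.succ_last]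
                      exact hlast)
                    (fun i => by
                      refine Fin.cases ?_ ?_ i
                      · rw [Fin.castSucc_zero, Fin.cons_zero]
                        exact ⟨hcQ, le_refl c, hcy⟩
                      · intro j
                        rw [← Fin.succ_castSucc, Fin.cons_succ, Fin.succ_castSucc]
                        refine ⟨(hmem j.succ).1, ?_, (hmem j.succ).2.2⟩
                        exact le_trans (le_of_lt hclt) (le_trans hz1w
                          (hmono (Fin.succ_le_castSucc_iff.mpr (Fin.succ_pos j))))
                    )
                    (fun i => by
                      refine Fin.cases ?_ ?_ i
                      · rw [Fin.castSucc_zero, Fin.cons_zero]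
                        exact le_of_lt hclt
                      · intro j
                        rw [← Fin.succ_castSucc, Fin.cons_succ, Fin.succ_castSucc]
                        exact hZW j.succ)
                    (fun i => by
                      refine Fin.cases ?_ ?_ i
                      · rw [Fin.cons_succ]
                        exact hWZ 0
                      · intro j
                        rw [Fin.cons_succ]
                        exact hWZ j.succ)
                    (fun i j => by
                      refine Fin.cases ?_ ?_ j
                      · rw [Fin.castSucc_zero, Fin.cons_zero]
                        refine Fin.cases ?_ ?_ i
                        · exact fun h => (ne_of_lt hclt) h.symm
                        · intro j'
                          refine ne_of_gt (lt_of_lt_of_le hclt ?_)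
                          exact le_trans hz1w (le_trans
                            (hmono (Fin.succ_le_castSucc_iff.mpr (Fin.succ_pos j')))
                            (hZW j'.succ))
                      · intro j'
                        rw [← Fin.succ_castSucc, Fin.cons_succ, Fin.succ_castSucc]
                        exact hred i j'.succ)
                    mQ hmQ
                  have hexp2 : (∑ i : Fin (k'+1),
                      (tv (w i) - tv ((Fin.cons c (fun i => z i.succ) : Fin (k'+2) → P)
                        i.castSucc))) = v + tv a - tv c := by
                    rw [Fin.sum_univ_succ, Fin.castSucc_zero, Fin.cons_zero]
                    have : ∀ i : Fin k',
                        (Fin.cons c (fun i => z i.succ) : Fin (k'+2) → P) (i.succ).castSucc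
                          = z (i.succ).castSucc := by
                      intro i
                      rw [← Fin.succ_castSucc, Fin.cons_succ, Fin.succ_castSucc]
                    rw [Finset.sum_congr rfl (fun i _ => by rw [this i])]
                    rw [hsplit, haeq]
                    abel
                  rw [hexp2] at hIH
                  rw [hIH]
                  rw [if_pos hclt]
                  rw [Fin.cons_zero, hicc, hmcc]
                  rw [Fin.prod_univ_succ, Fin.castSucc_zero, Fin.cons_zero]
                  have hcons1 : (Fin.cons c (fun i => z i.succ) : Fin (k'+2) → P)
                      ((0:Fin (k'+1)).succ) = z1 := by
                    rw [Fin.cons_succ, hz1]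
                  have htail : (∏ i : Fin k',
                      mQ i.succ ((Fin.cons c (fun i => z i.succ) : Fin (k'+2) → P)
                        (i.succ).castSucc) (w i.succ) *
                      (∑ cc ∈ (Finset.Icc (w i.succ)
                          ((Fin.cons c (fun i => z i.succ) : Fin (k'+2) → P) (i.succ).succ)).filter
                          (· ∈ Q),
                        mob (w i.succ) cc * invμ cc
                          ((Fin.cons c (fun i => z i.succ) : Fin (k'+2) → P) (i.succ).succ)))
                      = Pt := by
                    rw [hPt]
                    refine Finset.prod_congr rfl (fun i _ => ?_)
                    rw [← Fin.succ_castSucc, Fin.cons_succ, Fin.succ_castSucc, Fin.cons_succ]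
                  rw [hcons1, htail]
                  ring
                · intro u hu huc
                  rw [Finset.mem_Icc] at hu
                  by_cases hne : (invθ c y).coeff (v + tv a - tv u) = 0
                  · rw [hne, mul_zero]
                  · exfalso
                    rcases hZl c hcQ hac hca hcy u hu.1 hu.2 hne with h | ⟨h1, h2⟩
                    · exact hwc (h ▸ hu.2)
                    · exact huc h1
              · -- no survivors
                rw [if_neg hclt]
                rw [Finset.sum_eq_zero]
                · ring
                · intro u hu
                  rw [Finset.mem_Icc] at hu
                  by_cases hne : (invθ c y).coeff (v + tv a - tv u) = 0
                  · rw [hne, mul_zero]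
                  · exfalso
                    rcases hZl c hcQ hac hca hcy u hu.1 hu.2 hne with h | ⟨h1, h2⟩
                    · exact hwc (h ▸ hu.2)
                    · exact hclt (h1 ▸ h2)
          rw [Finset.sum_congr rfl hin]
          rw [Finset.sum_add_distrib, ← Finset.sum_mul, ← Finset.sum_mul]
          -- first sum = G
          have hA : (∑ c ∈ ((Finset.Icc a y).filter (· ∈ Q)).erase a,
              (if w 0 ≤ c ∧ c ≤ z1 then mob (w 0) c * invμ c z1 else 0)) = G := by
            rw [Finset.sum_ite, Finset.sum_const_zero, add_zero]
            rw [hG]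
            apply Finset.sum_congr
            · ext c
              simp only [Finset.mem_filter, Finset.mem_erase, Finset.mem_Icc]
              constructor
              · rintro ⟨⟨hca, ⟨⟨h1, h2⟩, h3⟩⟩, h4, h5⟩
                exact ⟨⟨h4, h5⟩, h3⟩
              · rintro ⟨⟨h4, h5⟩, h3⟩
                refine ⟨⟨?_, ⟨⟨?_, ?_⟩, h3⟩⟩, h4, h5⟩
                · exact ne_of_gt (lt_of_lt_of_le hw0 h4)
                · exact le_trans (le_of_lt hw0) h4
                · exact le_trans h5 (hzy _)
            · intro c _; rfl
          -- second sum
          have hmQid := (hmQ 0).2.1 a (Or.inl ha) (w 0) (Or.inr rfl)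
          rw [if_neg (ne_of_lt hw0)] at hmQid
          rw [Finset.filter_congr_decidable] at hmQid
          have hzz : ∀ e ∈ (Finset.Icc a (w 0)).filter (· ∈ Q ∪ {w 0}),
              (zeta a e : ℚ) * mQ 0 e (w 0) = mQ 0 e (w 0) := by
            intro e he
            rw [Finset.mem_filter, Finset.mem_Icc] at he
            rw [zeta, if_pos he.1.1, one_mul]
          rw [Finset.sum_congr rfl hzz] at hmQid
          have hmQid2 := hmQid
          have hamem : a ∈ (Finset.Icc a (w 0)).filter (· ∈ Q ∪ {w 0}) := by
            rw [Finset.mem_filter, Finset.mem_Icc]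
            exact ⟨⟨le_refl a, le_of_lt hw0⟩, Or.inl ha⟩
          rw [← Finset.add_sum_erase _ _ hamem] at hmQid2
          have hwmem : w 0 ∈ ((Finset.Icc a (w 0)).filter (· ∈ Q ∪ {w 0})).erase a := by
            rw [Finset.mem_erase, Finset.mem_filter, Finset.mem_Icc]
            exact ⟨ne_of_gt hw0, ⟨le_of_lt hw0, le_refl _⟩, Or.inr rfl⟩
          rw [← Finset.add_sum_erase _ _ hwmem,
            diag_one_left (hmQ 0) (Or.inr rfl) (zeta_diag (w 0))] at hmQid2
          have hB : (∑ c ∈ ((Finset.Icc a y).filter (· ∈ Q)).erase a,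
              (if c < w 0 then mQ 0 c (w 0) else 0))
                = -1 - mQ 0 a (w 0) := by
            rw [Finset.sum_ite, Finset.sum_const_zero, add_zero]
            have hseteq : (((Finset.Icc a y).filter (· ∈ Q)).erase a).filter (fun c => c < w 0)
                = (((Finset.Icc a (w 0)).filter (· ∈ Q ∪ {w 0})).erase a).erase (w 0) := by
              ext c
              simp only [Finset.mem_filter, Finset.mem_erase, Finset.mem_Icc]
              constructor
              · rintro ⟨⟨hca, ⟨⟨h1, h2⟩, h3⟩⟩, h4⟩
                exact ⟨ne_of_lt h4, hca, ⟨⟨h1, le_of_lt h4⟩, Or.inl h3⟩⟩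
              · rintro ⟨hcw, hca, ⟨⟨h1, h2⟩, h3⟩⟩
                have hcw' : c < w 0 := lt_of_le_of_ne h2 hcw
                have hcQ' : c ∈ Q := by
                  rcases h3 with h | h
                  · exact h
                  · exact absurd h hcw
                exact ⟨⟨hca, ⟨⟨h1, le_trans h2 hw0y⟩, hcQ'⟩⟩, hcw'⟩
            rw [hseteq]
            linarith
          rw [hA, hB]
          -- now the goal RHS
          have hgoal : invμ a (z 0) *
              (∏ i : Fin (k'+1), mQ i (z i.castSucc) (w i) *
                (∑ c ∈ (Finset.Icc (w i) (z i.succ)).filter (· ∈ Q),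
                  mob (w i) c * invμ c (z i.succ)))
              = mQ 0 a (w 0) * (G * Pt) := by
            have hz0a : z (0 : Fin (k'+2)) = a := by
              rw [show (0 : Fin (k'+2)) = Fin.castSucc (0 : Fin (k'+1)) from rfl, ← haeq]
            rw [Fin.prod_univ_succ, hz0a, diag_one_right hinvμ ha hmaa, one_mul, ← haeq,
              ← hz1, ← hG, ← hPt]
            ring
          show (0:ℚ) - (G * Pt + (-1 - mQ 0 a (w 0)) * (G * Pt))
              = invμ a (z 0) *
              (∏ i : Fin (k'+1), mQ i (z i.castSucc) (w i) *
                (∑ c ∈ (Finset.Icc (w i) (z i.succ)).filter (· ∈ Q),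
                  mob (w i) c * invμ c (z i.succ)))
          rw [hgoal]
          ring
        · -- a < z 0 : strict case
          set Pi := ∏ i : Fin (k'+1), mQ i (z i.castSucc) (w i) *
            (∑ c ∈ (Finset.Icc (w i) (z i.succ)).filter (· ∈ Q),
              mob (w i) c * invμ c (z i.succ)) with hPi
          have haltz : ∀ j : Fin (k'+1), a < z j.castSucc := fun j =>
            lt_of_lt_of_le halt (hmono (Fin.castSucc_le_castSucc_iff.mpr (Fin.zero_le j)))
          have haltw : ∀ j : Fin (k'+1), a < w j := fun j =>
            lt_of_lt_of_le (haltz j) (hZW j)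
          have hva : v a = 0 := by
            by_contra h
            rcases hvclass a h with ⟨j, hj⟩ | ⟨j, hj⟩
            · exact (ne_of_lt (haltz j)) hj
            · exact (ne_of_lt (haltw j)) hj
          have hin : ∀ c ∈ ((Finset.Icc a y).filter (· ∈ Q)).erase a,
              (∑ u ∈ Finset.Icc a c, mob u c * (invθ c y).coeff (v + tv a - tv u))
                = if c ≤ z (Fin.castSucc 0) then mob a c * (invμ c (z 0) * Pi) else 0 := by
            intro c hc
            obtain ⟨hca, hmemc⟩ := Finset.mem_erase.mp hc
            rw [Finset.mem_filter, Finset.mem_Icc] at hmemc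
            obtain ⟨⟨hac, hcy⟩, hcQ⟩ := hmemc
            rw [Finset.sum_eq_single_of_mem a (by simp [hac])]
            · have hredv : v + tv a - tv a = v := by abel
              rw [hredv]
              by_cases hcz : c ≤ z (Fin.castSucc 0)
              · rw [if_pos hcz]
                congr 1
                have hIH := IH c hcQ hcy (hstep c hac hca hcy) (k'+1) z w hlast
                  (fun i => ⟨(hmem i).1,
                    le_trans hcz (hmono (Fin.castSucc_le_castSucc_iff.mpr (Fin.zero_le i))),
                    (hmem i).2.2⟩)
                  hZW hWZ hred mQ hmQ
                rw [← hv, ← hPi] at hIH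
                exact hIH
              · rw [if_neg hcz]
                have h0 : (invθ c y).coeff v = 0 := by
                  refine coeff_zero hmob hinvθ hy hcQ hcy (fun hAdm => ?_)
                  obtain ⟨-, hsupp, -, -, -⟩ := hAdm.toRAdm.facts
                  have h1 := (hsupp (z (Fin.castSucc 0)) (by rw [hv, hvz 0]; norm_num)).1
                  exact hcz h1
                rw [h0, mul_zero]
            · intro u hu hua
              rw [Finset.mem_Icc] at hu
              have hz' : (invθ c y).coeff (v + tv a - tv u) = 0 := by
                refine coeff_zero hmob hinvθ hy hcQ hcy (fun hAdm => ?_)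
                obtain ⟨-, hsupp, -, -, hpos⟩ := hAdm.toRAdm.facts
                have hva' : (v + tv a - tv u) a = 1 := by
                  rw [shift_apply, if_pos rfl, if_neg hua, hva]; ring
                obtain ⟨q, hq1, hq2⟩ := hpos a (by rw [hva']; norm_num)
                have hqa : q ≠ a := ne_of_lt hq2
                rw [shift_apply, if_neg (fun h => hqa h.symm)] at hq1
                by_cases hqu : u = q
                · exact absurd hq2 (not_lt_of_ge (le_trans hu.1 (le_of_eq hqu)))
                · rw [if_neg hqu] at hq1
                  have hq3 : v q ≠ 0 := by omega
                  rcases hvclass q hq3 with ⟨j, hj⟩ | ⟨j, hj⟩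
                  · rw [hj] at hq2; exact lt_asymm hq2 (haltz j)
                  · rw [hj] at hq2; exact lt_asymm hq2 (haltw j)
              rw [hz', mul_zero]
          rw [Finset.sum_congr rfl hin]
          rw [Finset.sum_ite, Finset.sum_const_zero, add_zero]
          have hseteq : (((Finset.Icc a y).filter (· ∈ Q)).erase a).filter
              (fun c => c ≤ z (Fin.castSucc 0))
              = ((Finset.Icc a (z (Fin.castSucc 0))).filter (· ∈ Q)).erase a := by
            ext c
            simp only [Finset.mem_filter, Finset.mem_erase, Finset.mem_Icc]
            constructor
            · rintro ⟨⟨hca, ⟨⟨h1, h2⟩, h3⟩⟩, h4⟩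
              exact ⟨hca, ⟨⟨h1, h4⟩, h3⟩⟩
            · rintro ⟨hca, ⟨⟨h1, h2⟩, h3⟩⟩
              exact ⟨⟨hca, ⟨⟨h1, le_trans h2 (hzy _)⟩, h3⟩⟩, h2⟩
          rw [hseteq]
          have hz0Q : z (Fin.castSucc 0) ∈ Q := (hmem 0).1
          have hids := hinvμ.2.1 a ha (z (Fin.castSucc 0)) hz0Q
          rw [← Finset.add_sum_erase _ _
            (show a ∈ (Finset.Icc a (z (Fin.castSucc 0))).filter (· ∈ Q) by
              rw [Finset.mem_filter, Finset.mem_Icc]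
              exact ⟨⟨le_refl a, le_of_lt halt⟩, ha⟩),
            hmaa, one_mul, if_neg (ne_of_lt halt)] at hids
          have hfac : ∀ c ∈ ((Finset.Icc a (z (Fin.castSucc 0))).filter (· ∈ Q)).erase a,
              mob a c * (invμ c (z 0) * Pi) = (mob a c * invμ c (z (Fin.castSucc 0))) * Pi := by
            intro c _
            rw [show (0 : Fin (k'+2)) = Fin.castSucc (0 : Fin (k'+1)) from rfl]
            ring
          rw [Finset.sum_congr rfl hfac, ← Finset.sum_mul]
          have hfin : (∑ c ∈ ((Finset.Icc a (z (Fin.castSucc 0))).filter (· ∈ Q)).erase a,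
              mob a c * invμ c (z (Fin.castSucc 0))) = - invμ a (z (Fin.castSucc 0)) := by
            linarith
          rw [hfin]
          show (0:ℚ) - (- invμ a (z (Fin.castSucc 0)) * Pi)
              = invμ a (z 0) *
              (∏ i : Fin (k'+1), mQ i (z i.castSucc) (w i) *
                (∑ c ∈ (Finset.Icc (w i) (z i.succ)).filter (· ∈ Q),
                  mob (w i) c * invμ c (z i.succ)))
          rw [show z (0 : Fin (k'+2)) = z (Fin.castSucc 0) from rfl, ← hPi]
          ring

end Main

end


/-- let `Q ⊆ P`, `x, y ∈ Q` with `x ≤ y`, let `mob` be the Möbius function of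
`P`, `invθ` represent `Inv_Q θ`, and `invμ` represent `Inv_Q mob`.  Then:
(1) `Inv_Q θ (x,y)` lies in the `ℚ`-span of the `[x,y]_Q`-admissible monomials
`Π_{i<k} t_{w_i}/t_{z_i}`, given by data `z : Fin (k+1) → P` with `z_k = y` (so that the
first `k` values are the `z_i` and the last one plays the role of `z_{k+1} = y` of the paper),
`z_i ∈ [x,y]_Q`, `w : Fin k → P`, and `z₁ ≤ w₁ ≤ z₂ ≤ ⋯ ≤ z_k ≤ w_k ≤ y`;
(2) if such a monomial is in reduced (admissible) form, i.e. `w_i ≠ z_j` for all `i, j`,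
then its coefficient in `Inv_Q θ (x,y)` equals
`Inv_Q mob (x, z₁) · Π_i μ_{Q_i}(z_i, w_i) · Γ_Q(w_i, z_{i+1})` with `Q_i = Q ∪ {w_i}`,
where `μ_{Q_i}` (represented by `mQ i`) is the Möbius function of the subposet `Q_i` and
`Γ_Q(a,b) = Σ_{a ≤ c ≤ b, c ∈ Q} mob(a,c) · Inv_Q mob (c,b)`. -/
theorem statement8 [PartialOrder P] [LocallyFiniteOrder P]
    (Q : Set P) (x y : P) (hxQ : x ∈ Q) (hyQ : y ∈ Q) (hxy : x ≤ y)
    (mob : P → P → ℚ) (hmob : IsInvOn Set.univ zeta mob)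
    (invθ : P → P → AP P) (hinvθ : IsInvOn Q (theta mob) invθ)
    (invμ : P → P → ℚ) (hinvμ : IsInvOn Q mob invμ) :
    (invθ x y ∈ Submodule.span ℚ {a : AP P | ∃ (k : ℕ) (z : Fin (k+1) → P) (w : Fin k → P),
        z (Fin.last k) = y ∧
        (∀ i : Fin k, z i.castSucc ∈ Q ∧ x ≤ z i.castSucc ∧ z i.castSucc ≤ y) ∧
        (∀ i : Fin k, z i.castSucc ≤ w i) ∧ (∀ i : Fin k, w i ≤ z i.succ) ∧
        a = AddMonoidAlgebra.single (∑ i : Fin k, (tv (w i) - tv (z i.castSucc))) 1}) ∧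
    (∀ (k : ℕ) (z : Fin (k+1) → P) (w : Fin k → P),
      z (Fin.last k) = y →
      (∀ i : Fin k, z i.castSucc ∈ Q ∧ x ≤ z i.castSucc ∧ z i.castSucc ≤ y) →
      (∀ i : Fin k, z i.castSucc ≤ w i) → (∀ i : Fin k, w i ≤ z i.succ) →
      (∀ (i : Fin k) (j : Fin k), w i ≠ z j.castSucc) →
      ∀ mQ : Fin k → (P → P → ℚ), (∀ i, IsInvOn (Q ∪ {w i}) zeta (mQ i)) →
        (invθ x y).coeff (∑ i : Fin k, (tv (w i) - tv (z i.castSucc))) =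
          invμ x (z 0) *
            ∏ i : Fin k, mQ i (z i.castSucc) (w i) *
              (∑ c ∈ (Finset.Icc (w i) (z i.succ)).filter (· ∈ Q),
                mob (w i) c * invμ c (z i.succ))) := by
  constructor
  · have hspan := span_adm hmob hinvθ hyQ (Finset.Icc x y).card x hxQ hxy le_rfl
    refine Submodule.span_mono ?_ hspan
    rintro f ⟨v, hv, rfl⟩
    obtain ⟨k, z, w, h1, h2, h3, h4, h5⟩ := hv.toFin
    exact ⟨k, z, w, h1, h2, h3, h4, by rw [h5]⟩
  · intro k z w hlast hmem hZW hWZ hred mQ hmQ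
    exact main_coeff hmob hinvθ hinvμ hyQ (Finset.Icc x y).card x hxQ hxy le_rfl
      k z w hlast hmem hZW hWZ hred mQ hmQ
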